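/- arXiv:1207.4771 — 5 statements merged into one kernel-verified Lean document; each statement's English description precedes it below -/
import Mathlib

section
/- Let α be a finite type with decidable equality, let g be a permutation of α, and let f be a permutation of α × Bool lifting g (i.e. (f (a,b)).1 = g a for all a : α, b : Bool). Let R be a finite subset of α containing exactly one representative of each cycle of g, i.e. for every x : α there is a unique a with a ∈ R and g.SameCycle x a. Then the sign of f equals the product over a ∈ R of ε(a), where ε(a) = 1 if (f ^ ℓ(a)) (a، true) = (a, true) and ε(a) = −1 otherwise; here ℓ(a) = Function.minimalPeriod g a. In symbols: Equiv.Perm.sign f = ∏_{a ∈ R} (if (f ^ Function.minimalPeriod g a) (a, true) = (a, true) then 1 else -1). -/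
namespace SignLiftAux

open Equiv Finset

variable {α : Type*} [Fintype α] [DecidableEq α]

/-- The first component of an iterate of a lift. -/
theorem fst_pow (g : Equiv.Perm α) (f : Equiv.Perm (α × Bool))
    (hf : ∀ (a : α) (b : Bool), (f (a, b)).1 = g a) :
    ∀ (n : ℕ) (x : α) (b : Bool), ((f ^ n) (x, b)).1 = (g ^ n) x := by
  intro n
  induction n with
  | zero => intro x b; simp
  | succ n ih =>
    intro x b
    rw [pow_succ, Equiv.Perm.mul_apply, pow_succ, Equiv.Perm.mul_apply]
    have h := ih (f (x, b)).1 (f (x, b)).2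
    rw [← hf x b]
    exact h

theorem fst_zpow (g : Equiv.Perm α) (f : Equiv.Perm (α × Bool))
    (hf : ∀ (a : α) (b : Bool), (f (a, b)).1 = g a) :
    ∀ (n : ℤ) (x : α) (b : Bool), ((f ^ n) (x, b)).1 = (g ^ n) x := by
  intro n x b
  obtain ⟨m, rfl | rfl⟩ := Int.eq_nat_or_neg n
  · rw [zpow_natCast, zpow_natCast]; exact fst_pow g f hf m x b
  · set p := (f ^ (-(m : ℤ))) (x, b) with hp
    have h1 : (f ^ (m : ℕ)) p = (x, b) := by
      rw [hp, ← Equiv.Perm.mul_apply, ← zpow_natCast f m, ← zpow_add]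
      simp
    have h2 : (g ^ (m : ℕ)) p.1 = x := by
      have h3 := fst_pow g f hf m p.1 p.2
      rw [show ((p.1, p.2) : α × Bool) = p from rfl, h1] at h3
      exact h3.symm
    show p.1 = (g ^ (-(m : ℤ))) x
    rw [← h2, zpow_neg, zpow_natCast]
    exact (Equiv.symm_apply_apply _ _).symm

theorem proj_sameCycle (g : Equiv.Perm α) (f : Equiv.Perm (α × Bool))
    (hf : ∀ (a : α) (b : Bool), (f (a, b)).1 = g a)
    {x y : α × Bool} (h : f.SameCycle x y) : g.SameCycle x.1 y.1 := by
  obtain ⟨n, hn⟩ := h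
  refine ⟨n, ?_⟩
  rw [← hn]
  exact (fst_zpow g f hf n x.1 x.2).symm

theorem g_pow_minimalPeriod (g : Equiv.Perm α) (a : α) :
    (g ^ Function.minimalPeriod ⇑g a) a = a := by
  have h := Function.iterate_minimalPeriod (f := ⇑g) (x := a)
  rwa [Equiv.Perm.iterate_eq_pow] at h

theorem minimalPeriod_pos (g : Equiv.Perm α) (a : α) :
    0 < Function.minimalPeriod ⇑g a := by
  have h1 : (⇑g)^[orderOf g] a = a := by
    rw [Equiv.Perm.iterate_eq_pow, pow_orderOf_eq_one]; rfl
  exact Function.IsPeriodicPt.minimalPeriod_pos (orderOf_pos g) h1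

theorem fix_zpow_mul (g : Equiv.Perm α) (a : α) (m : ℤ) :
    (g ^ ((Function.minimalPeriod ⇑g a : ℤ) * m)) a = a := by
  rw [zpow_mul, zpow_natCast]
  exact Equiv.Perm.zpow_apply_eq_self_of_apply_eq_self (g_pow_minimalPeriod g a) m

theorem minimalPeriod_dvd_int (g : Equiv.Perm α) (a : α) {n : ℤ}
    (h : (g ^ n) a = a) : (Function.minimalPeriod ⇑g a : ℤ) ∣ n := by
  set ℓ := Function.minimalPeriod ⇑g a with hℓ
  have hpos : 0 < ℓ := minimalPeriod_pos g a
  have hposz : (0 : ℤ) < (ℓ : ℤ) := by exact_mod_cast hpos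
  have hmod : (g ^ (n % (ℓ : ℤ))) a = a := by
    have hdef : n % (ℓ : ℤ) = n + (ℓ : ℤ) * (-(n / (ℓ : ℤ))) := by
      rw [mul_neg, ← sub_eq_add_neg, Int.emod_def]
    rw [hdef, zpow_add, Equiv.Perm.mul_apply, fix_zpow_mul, h]
  set r : ℕ := (n % (ℓ : ℤ)).toNat with hr
  have hnonneg : (0 : ℤ) ≤ n % (ℓ : ℤ) := Int.emod_nonneg n (ne_of_gt hposz)
  have hcast : ((r : ℤ)) = n % (ℓ : ℤ) := Int.toNat_of_nonneg hnonneg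
  have hlt : r < ℓ := by
    have := Int.emod_lt_of_pos n hposz
    omega
  have hfixr : (g ^ r) a = a := by
    rw [← zpow_natCast, hcast]; exact hmod
  have hper : Function.IsPeriodicPt ⇑g r a := by
    have : (⇑g)^[r] a = a := by rw [Equiv.Perm.iterate_eq_pow]; exact hfixr
    exact this
  have hdvd : ℓ ∣ r := hper.minimalPeriod_dvd
  have hr0 : r = 0 := Nat.eq_zero_of_dvd_of_lt hdvd hlt
  have : n % (ℓ : ℤ) = 0 := by omega
  exact Int.dvd_of_emod_eq_zero this

/-- A point over `a` which is not `(a, true)` is `(a, false)`. -/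
theorem eq_of_fst_eq {a : α} {p : α × Bool} (h1 : p.1 = a) (h2 : p ≠ (a, true)) :
    p = (a, false) := by
  have hp : p = (p.1, p.2) := rfl
  rcases Bool.eq_false_or_eq_true p.2 with hb | hb
  · exact absurd (by rw [hp, h1, hb]) h2
  · rw [hp, h1, hb]

theorem eq_of_fst_eq' {a : α} {p : α × Bool} (h1 : p.1 = a) (h2 : p ≠ (a, false)) :
    p = (a, true) := by
  have hp : p = (p.1, p.2) := rfl
  rcases Bool.eq_false_or_eq_true p.2 with hb | hb
  · rw [hp, h1, hb]
  · exact absurd (by rw [hp, h1, hb]) h2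

section lift

variable (g : Equiv.Perm α) (f : Equiv.Perm (α × Bool))
    (hf : ∀ (a : α) (b : Bool), (f (a, b)).1 = g a)

include hf

theorem fiber_fix_false {a : α}
    (hns : (f ^ Function.minimalPeriod ⇑g a) (a, true) = (a, true)) :
    (f ^ Function.minimalPeriod ⇑g a) (a, false) = (a, false) := by
  set ℓ := Function.minimalPeriod ⇑g a
  have h1 : ((f ^ ℓ) (a, false)).1 = a := by
    rw [fst_pow g f hf]; exact g_pow_minimalPeriod g a
  have h2 : (f ^ ℓ) (a, false) ≠ (a, true) := by
    intro h
    have := (f ^ ℓ).injective (h.trans hns.symm)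
    simp at this
  exact eq_of_fst_eq h1 h2

theorem noswap_fix {a : α}
    (hns : (f ^ Function.minimalPeriod ⇑g a) (a, true) = (a, true))
    {n : ℤ} (hn : (Function.minimalPeriod ⇑g a : ℤ) ∣ n) (b : Bool) :
    (f ^ n) (a, b) = (a, b) := by
  obtain ⟨m, rfl⟩ := hn
  rw [zpow_mul, zpow_natCast]
  apply Equiv.Perm.zpow_apply_eq_self_of_apply_eq_self
  cases b
  · exact fiber_fix_false g f hf hns
  · exact hns

theorem swap_eq {a : α}
    (hs : (f ^ Function.minimalPeriod ⇑g a) (a, true) ≠ (a, true)) :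
    (f ^ Function.minimalPeriod ⇑g a) (a, true) = (a, false) ∧
      (f ^ Function.minimalPeriod ⇑g a) (a, false) = (a, true) := by
  set ℓ := Function.minimalPeriod ⇑g a
  have h1 : ((f ^ ℓ) (a, true)).1 = a := by
    rw [fst_pow g f hf]; exact g_pow_minimalPeriod g a
  have htrue : (f ^ ℓ) (a, true) = (a, false) := eq_of_fst_eq h1 hs
  have h2 : ((f ^ ℓ) (a, false)).1 = a := by
    rw [fst_pow g f hf]; exact g_pow_minimalPeriod g a
  have h3 : (f ^ ℓ) (a, false) ≠ (a, false) := by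
    intro h
    have := (f ^ ℓ).injective (h.trans htrue.symm)
    simp at this
  exact ⟨htrue, eq_of_fst_eq' h2 h3⟩

theorem fix_false_of_fix_true {a : α} (h : f (a, true) = (a, true)) :
    f (a, false) = (a, false) := by
  have h1 : (f (a, false)).1 = a := by
    rw [hf]
    have : g a = (f (a, true)).1 := (hf a true).symm
    rw [this, h]
  have h2 : f (a, false) ≠ (a, true) := by
    intro hh
    have := f.injective (hh.trans h.symm)
    simp at this
  exact eq_of_fst_eq h1 h2

theorem ne_false_of_ne_true {a : α} (h : f (a, true) ≠ (a, true)) :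
    f (a, false) ≠ (a, false) := by
  intro hh
  apply h
  have h1 : (f (a, true)).1 = a := by
    rw [hf]
    have : g a = (f (a, false)).1 := (hf a false).symm
    rw [this, hh]
  have h2 : f (a, true) ≠ (a, false) := by
    intro h3
    have := f.injective (h3.trans hh.symm)
    simp at this
  exact eq_of_fst_eq' h1 h2

end lift

end SignLiftAux

theorem sign_of_lift_eq_prod_over_cycle_reps
    {α : Type*} [Fintype α] [DecidableEq α]
    (g : Equiv.Perm α) (f : Equiv.Perm (α × Bool))
    (hf : ∀ (a : α) (b : Bool), (f (a, b)).1 = g a)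
    (R : Finset α)
    (hR : ∀ x : α, ∃! a : α, a ∈ R ∧ g.SameCycle x a) :
    Equiv.Perm.sign f =
      ∏ a ∈ R,
        (if (f ^ Function.minimalPeriod g a) (a, true) = (a, true)
          then (1 : ℤˣ) else -1) := by
  classical
  open SignLiftAux in
  rcases isEmpty_or_nonempty α with hα | hα
  · have hR0 : R = ∅ := by
      rw [Finset.eq_empty_iff_forall_notMem]
      intro a _
      exact hα.elim a
    have hf1 : f = 1 := Equiv.ext fun x => hα.elim x.1
    rw [hR0, hf1, Finset.prod_empty, map_one]
  -- main case
  have hsign : Equiv.Perm.sign f = ∏ c ∈ f.cycleFactorsFinset, Equiv.Perm.sign c := by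
    have hm := Finset.map_noncommProd f.cycleFactorsFinset id
      (Equiv.Perm.cycleFactorsFinset_mem_commute f) (Equiv.Perm.sign (α := α × Bool))
    rw [Equiv.Perm.cycleFactorsFinset_noncommProd] at hm
    rw [hm, Finset.noncommProd_eq_prod]
    simp
  -- the base point of a cycle
  have hne_of_mem : ∀ c ∈ f.cycleFactorsFinset, c.support.Nonempty := by
    intro c hc
    exact (Equiv.Perm.mem_cycleFactorsFinset_iff.mp hc).1.nonempty_support
  let pt : Equiv.Perm (α × Bool) → α × Bool := fun c =>
    if h : c.support.Nonempty then h.choose else Classical.arbitrary _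
  have hpt : ∀ c : Equiv.Perm (α × Bool), c.support.Nonempty → pt c ∈ c.support := by
    intro c h
    show (if h : c.support.Nonempty then h.choose else Classical.arbitrary _) ∈ c.support
    rw [dif_pos h]
    exact h.choose_spec
  let φ : Equiv.Perm (α × Bool) → α := fun c =>
    Finset.choose _ R (hR (pt c).1)
  have hφmem : ∀ c, φ c ∈ R := fun c => Finset.choose_mem _ _ _
  have hφsc : ∀ c, g.SameCycle (pt c).1 (φ c) := fun c => Finset.choose_property _ _ _
  have hφuniq : ∀ (c) (a : α), a ∈ R → g.SameCycle (pt c).1 a → φ c = a := by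
    intro c a ha hsc
    exact ((hR (pt c).1).unique ⟨hφmem c, hφsc c⟩ ⟨ha, hsc⟩)
  -- key characterization of the fibers of φ on cycle factors
  have key1 : ∀ c ∈ f.cycleFactorsFinset, ∀ a ∈ R,
      (φ c = a ↔ ∃ b, c = f.cycleOf (a, b)) := by
    intro c hc a ha
    have hne : c.support.Nonempty := hne_of_mem c hc
    have hy : pt c ∈ c.support := hpt c hne
    constructor
    · intro hpc
      have hceq : c = f.cycleOf (pt c) := Equiv.Perm.cycle_is_cycleOf hy hc
      have hsc : g.SameCycle (pt c).1 a := hpc ▸ hφsc c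
      obtain ⟨n, hn⟩ := hsc
      set p := (f ^ n) (pt c) with hp
      have hp1 : p.1 = a := by
        have h1 := fst_zpow g f hf n (pt c).1 (pt c).2
        rw [show (((pt c).1, (pt c).2) : α × Bool) = pt c from rfl] at h1
        rw [hp, h1, hn]
      refine ⟨p.2, ?_⟩
      have hap : ((a, p.2) : α × Bool) = p := by rw [← hp1]
      rw [hap, hceq]
      exact Equiv.Perm.SameCycle.cycleOf_eq ⟨n, rfl⟩
    · rintro ⟨b, rfl⟩
      have hab : (a, b) ∈ f.support := Equiv.Perm.cycleOf_mem_cycleFactorsFinset_iff.mp hc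
      have hfab : f (a, b) ≠ (a, b) := Equiv.Perm.mem_support.mp hab
      have hsc : f.SameCycle (a, b) (pt (f.cycleOf (a, b))) :=
        (Equiv.Perm.mem_support_cycleOf_iff' hfab).mp hy
      have hgsc : g.SameCycle a (pt (f.cycleOf (a, b))).1 := proj_sameCycle g f hf hsc
      exact hφuniq _ a ha hgsc.symm
  rw [hsign, ← Finset.prod_fiberwise_of_maps_to (fun c _ => hφmem c)
    (fun c => Equiv.Perm.sign c)]
  apply Finset.prod_congr rfl
  intro a ha
  have hfiber : f.cycleFactorsFinset.filter (fun c => φ c = a) =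
      f.cycleFactorsFinset ∩ {f.cycleOf (a, true), f.cycleOf (a, false)} := by
    ext c
    simp only [Finset.mem_filter, Finset.mem_inter, Finset.mem_insert, Finset.mem_singleton]
    constructor
    · rintro ⟨hc, hpc⟩
      obtain ⟨b, rfl⟩ := (key1 c hc a ha).mp hpc
      refine ⟨hc, ?_⟩
      cases b
      · right; rfl
      · left; rfl
    · rintro ⟨hc, hor⟩
      refine ⟨hc, (key1 c hc a ha).mpr ?_⟩
      rcases hor with h | h
      exacts [⟨true, h⟩, ⟨false, h⟩]
  by_cases hfix : f (a, true) = (a, true)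
  · -- trivial fiber over a
    have hfixf : f (a, false) = (a, false) := fix_false_of_fix_true g f hf hfix
    have hempty : f.cycleFactorsFinset ∩
        {f.cycleOf (a, true), f.cycleOf (a, false)} = ∅ := by
      rw [Finset.eq_empty_iff_forall_notMem]
      intro c hc
      rw [Finset.mem_inter, Finset.mem_insert, Finset.mem_singleton] at hc
      rcases hc with ⟨hc1, hc2 | hc2⟩ <;> subst hc2
      · exact (Equiv.Perm.mem_support.mp
          (Equiv.Perm.cycleOf_mem_cycleFactorsFinset_iff.mp hc1)) hfix
      · exact (Equiv.Perm.mem_support.mp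
          (Equiv.Perm.cycleOf_mem_cycleFactorsFinset_iff.mp hc1)) hfixf
    have hga : g a = a := by
      have := hf a true
      rw [hfix] at this
      exact this.symm
    have hl : Function.minimalPeriod ⇑g a = 1 :=
      Function.minimalPeriod_eq_one_iff_isFixedPt.mpr hga
    rw [hfiber, hempty, Finset.prod_empty, hl, pow_one, if_pos hfix]
  · -- a is in the support of f
    have hfixf : f (a, false) ≠ (a, false) := ne_false_of_ne_true g f hf hfix
    have hm1 : f.cycleOf (a, true) ∈ f.cycleFactorsFinset :=
      Equiv.Perm.cycleOf_mem_cycleFactorsFinset_iff.mpr (Equiv.Perm.mem_support.mpr hfix)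
    have hm2 : f.cycleOf (a, false) ∈ f.cycleFactorsFinset :=
      Equiv.Perm.cycleOf_mem_cycleFactorsFinset_iff.mpr (Equiv.Perm.mem_support.mpr hfixf)
    have hinter : f.cycleFactorsFinset ∩
        {f.cycleOf (a, true), f.cycleOf (a, false)} =
        {f.cycleOf (a, true), f.cycleOf (a, false)} := by
      apply Finset.inter_eq_right.mpr
      intro c hc
      rw [Finset.mem_insert, Finset.mem_singleton] at hc
      rcases hc with h | h <;> subst h
      · exact hm1
      · exact hm2
    by_cases hswap : (f ^ Function.minimalPeriod ⇑g a) (a, true) = (a, true)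
    · -- no swap : two distinct cycles with the same support cardinality
      have hne12 : f.cycleOf (a, true) ≠ f.cycleOf (a, false) := by
        intro h
        have hmem : ((a, false) : α × Bool) ∈ (f.cycleOf (a, false)).support :=
          (Equiv.Perm.mem_support_cycleOf_iff' hfixf).mpr (Equiv.Perm.SameCycle.refl _ _)
        rw [← h] at hmem
        have hsc : f.SameCycle (a, true) (a, false) :=
          (Equiv.Perm.mem_support_cycleOf_iff' hfix).mp hmem
        obtain ⟨n, hn⟩ := hsc
        have hgn : (g ^ n) a = a := by
          have h1 := fst_zpow g f hf n a true
          rw [hn] at h1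
          exact h1.symm
        have := noswap_fix g f hf hswap (minimalPeriod_dvd_int g a hgn) true
        rw [hn] at this
        simp at this
      -- the two supports have the same cardinality
      have hinj : ∀ b : Bool, Set.InjOn Prod.fst ((f.cycleOf (a, b)).support : Set (α × Bool)) := by
        intro b y1 hy1 y2 hy2 heq
        have hfb : f (a, b) ≠ (a, b) := by cases b; exacts [hfixf, hfix]
        obtain ⟨n1, hn1⟩ := (Equiv.Perm.mem_support_cycleOf_iff' hfb).mp hy1
        obtain ⟨n2, hn2⟩ := (Equiv.Perm.mem_support_cycleOf_iff' hfb).mp hy2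
        have hgn1 : (g ^ n1) a = y1.1 := by
          have := fst_zpow g f hf n1 a b; rw [hn1] at this; exact this.symm
        have hgn2 : (g ^ n2) a = y2.1 := by
          have := fst_zpow g f hf n2 a b; rw [hn2] at this; exact this.symm
        have hg : (g ^ (-n2 + n1)) a = a := by
          rw [zpow_add, Equiv.Perm.mul_apply, hgn1, heq, ← hgn2, zpow_neg,
            Equiv.Perm.inv_def, Equiv.symm_apply_apply]
        have hfixn : (f ^ (-n2 + n1)) (a, b) = (a, b) :=
          noswap_fix g f hf hswap (minimalPeriod_dvd_int g a hg) b
        have : (f ^ n1) (a, b) = (f ^ n2) (a, b) := by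
          have h := congrArg (f ^ n2) hfixn
          rw [← Equiv.Perm.mul_apply, ← zpow_add, show n2 + (-n2 + n1) = n1 by ring] at h
          exact h
        rw [← hn1, ← hn2, this]
      have himg : ∀ b : Bool, ((f.cycleOf (a, b)).support.image Prod.fst) ⊆
          ((f.cycleOf (a, !b)).support.image Prod.fst) := by
        intro b x hx
        have hfb : f (a, b) ≠ (a, b) := by cases b; exacts [hfixf, hfix]
        have hfnb : f (a, !b) ≠ (a, !b) := by cases b; exacts [hfix, hfixf]
        rw [Finset.mem_image] at hx ⊢
        obtain ⟨y, hy, hyx⟩ := hx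
        obtain ⟨n, hn⟩ := (Equiv.Perm.mem_support_cycleOf_iff' hfb).mp hy
        refine ⟨(f ^ n) (a, !b), (Equiv.Perm.mem_support_cycleOf_iff' hfnb).mpr ⟨n, rfl⟩, ?_⟩
        rw [fst_zpow g f hf n a]
        have := fst_zpow g f hf n a b
        rw [hn] at this
        rw [← this, hyx]
      have hcard : (f.cycleOf (a, true)).support.card =
          (f.cycleOf (a, false)).support.card := by
        rw [← Finset.card_image_of_injOn (hinj true),
          ← Finset.card_image_of_injOn (hinj false)]
        congr 1
        exact Finset.Subset.antisymm (himg true) (himg false)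
      have hc1 : (f.cycleOf (a, true)).IsCycle := Equiv.Perm.isCycle_cycleOf f hfix
      have hc2 : (f.cycleOf (a, false)).IsCycle := Equiv.Perm.isCycle_cycleOf f hfixf
      rw [hfiber, hinter, Finset.prod_pair hne12, if_pos hswap, hc1.sign, hc2.sign, hcard]
      exact Int.units_mul_self _
    · -- swap : a single cycle with even support
      have hsw := swap_eq g f hf hswap
      have hsc : f.SameCycle (a, true) (a, false) := by
        refine ⟨(Function.minimalPeriod ⇑g a : ℤ), ?_⟩
        rw [zpow_natCast]
        exact hsw.1
      have hc12 : f.cycleOf (a, true) = f.cycleOf (a, false) :=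
        Equiv.Perm.SameCycle.cycleOf_eq hsc
      -- support is a product, hence has even cardinality
      have hprod : (f.cycleOf (a, true)).support =
          ((f.cycleOf (a, true)).support.image Prod.fst) ×ˢ (Finset.univ : Finset Bool) := by
        apply Finset.Subset.antisymm
        · intro y hy
          rw [Finset.mem_product]
          exact ⟨Finset.mem_image_of_mem _ hy, Finset.mem_univ _⟩
        · intro y hy
          rw [Finset.mem_product, Finset.mem_image] at hy
          obtain ⟨⟨z, hz, hzy⟩, -⟩ := hy
          obtain ⟨n, hn⟩ := (Equiv.Perm.mem_support_cycleOf_iff' hfix).mp hz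
          -- the other lift of z.1 is also in the support
          have hz' : ((f ^ n) (a, false)) ∈ (f.cycleOf (a, true)).support := by
            refine (Equiv.Perm.mem_support_cycleOf_iff' hfix).mpr ?_
            exact hsc.trans ⟨n, rfl⟩
          have hz'1 : ((f ^ n) (a, false)).1 = z.1 := by
            rw [fst_zpow g f hf n a]
            have := fst_zpow g f hf n a true
            rw [hn] at this
            rw [← this]
          have hzz' : (f ^ n) (a, false) ≠ z := by
            rw [← hn]
            intro h
            have := (f ^ n).injective h
            simp at this
          have hsnd : ((f ^ n) (a, false)).2 ≠ z.2 := by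
            intro h
            exact hzz' (Prod.ext (hz'1.trans rfl) h)
          -- y is one of the two lifts of z.1
          have hflip : ∀ u v : Bool, u ≠ v → u = !v := by decide
          have : y = z ∨ y = (f ^ n) (a, false) := by
            by_cases hyz : y.2 = z.2
            · left
              exact Prod.ext_iff.mpr ⟨hzy.symm, hyz⟩
            · right
              refine Prod.ext_iff.mpr ⟨hzy.symm.trans hz'1.symm, ?_⟩
              exact (hflip _ _ hyz).trans ((hflip _ _ hsnd)).symm
          rcases this with h | h
          · rw [h]; exact hz
          · rw [h]; exact hz'
      have heven : Even (f.cycleOf (a, true)).support.card := by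
        rw [hprod, Finset.card_product, Finset.card_univ, Fintype.card_bool]
        exact ⟨_, (mul_two _)⟩
      have hc1 : (f.cycleOf (a, true)).IsCycle := Equiv.Perm.isCycle_cycleOf f hfix
      rw [hfiber, hinter, ← hc12, Finset.pair_eq_singleton, Finset.prod_singleton,
        if_neg hswap, hc1.sign, heven.neg_one_pow]
end

section
/- Let α be a finite type with decidable equality, let g be a permutation of α, and let f₁, f₂ be two permutations of α × Bool both lifting g (i.e. (fᵢ (a,b)).1 = g a for all a, b). If for every a : α one has (f₁ ^ ℓ(a)) (a, true) = (a, true) ↔ (f₂ ^ ℓ(a)) (a, true) = (a, true), where ℓ(a) = Function.minimalPeriod g a, then Equiv.Perm.sign f₁ = Equiv.Perm.sign f₂. In other words, the sign of a lift of g depends only on the data of which fibers it swaps. -/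
open Equiv Function Finset

namespace SignLiftAux

variable {α : Type*} [Fintype α] [DecidableEq α]

/-- ±1 value of a boolean. -/
def χ (b : Bool) : ℤˣ := if b then -1 else 1

lemma χ_xor (x y : Bool) : χ (xor x y) = χ x * χ y := by
  cases x <;> cases y <;> simp [χ]

/-- xor of `s` along the first `n` iterates of `g` starting at `a`. -/
def xorIter (s : α → Bool) (g : Equiv.Perm α) : ℕ → α → Bool
  | 0, _ => false
  | n + 1, a => xor (xorIter s g n a) (s ((g ^ n) a))

lemma lift_apply (g : Equiv.Perm α) (f : Equiv.Perm (α × Bool))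
    (hf : ∀ a b, (f (a, b)).1 = g a) (a : α) (b : Bool) :
    f (a, b) = (g a, xor (!(f (a, true)).2) b) := by
  have hne : (f (a, false)).2 ≠ (f (a, true)).2 := by
    intro hsnd
    have : f (a, false) = f (a, true) :=
      Prod.ext (by rw [hf a false, hf a true]) hsnd
    simpa using f.injective this
  cases b
  · have h2 : (f (a, false)).2 = !(f (a, true)).2 := by
      cases h1 : (f (a, true)).2 <;> cases h0 : (f (a, false)).2 <;> simp_all
    exact Prod.ext (hf a false) (by simpa using h2)
  · exact Prod.ext (hf a true) (by simp)

lemma lift_pow_apply (g : Equiv.Perm α) (f : Equiv.Perm (α × Bool)) (s : α → Bool)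
    (hs : ∀ a b, f (a, b) = (g a, xor (s a) b)) :
    ∀ (n : ℕ) (a : α) (b : Bool),
      (f ^ n) (a, b) = ((g ^ n) a, xor (xorIter s g n a) b)
  | 0, a, b => by simp [xorIter]
  | n + 1, a, b => by
    rw [pow_succ' f n, Equiv.Perm.mul_apply, lift_pow_apply g f s hs n a b,
      hs ((g ^ n) a) (xor (xorIter s g n a) b), pow_succ' g n, Equiv.Perm.mul_apply]
    refine Prod.ext rfl ?_
    show xor (s ((g ^ n) a)) (xor (xorIter s g n a) b)
      = xor (xor (xorIter s g n a) (s ((g ^ n) a))) b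
    cases s ((g ^ n) a) <;> cases xorIter s g n a <;> cases b <;> rfl

lemma sign_lift (g : Equiv.Perm α) (f : Equiv.Perm (α × Bool)) (s : α → Bool)
    (hs : ∀ a b, f (a, b) = (g a, xor (s a) b)) :
    Equiv.Perm.sign f = ∏ a, χ (s a) := by
  set σ : α → Equiv.Perm Bool := fun a => if s a then Equiv.swap false true else 1 with hσ
  have hσab : ∀ a b, σ a b = xor (s a) b := by
    intro a b
    cases hsa : s a <;> cases b <;> simp [hσ, hsa, Equiv.swap_apply_def]
  have hf : f = (Equiv.prodCongr g (Equiv.refl Bool)) * (Equiv.prodCongrRight σ) := by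
    ext ⟨a, b⟩
    · rw [hs a b]; rfl
    · rw [hs a b]
      show xor (s a) b = (σ a b : Bool)
      rw [hσab]
  rw [hf, map_mul]
  have h1 : Equiv.Perm.sign (Equiv.prodCongr g (Equiv.refl Bool)) = 1 := by
    rw [Equiv.prodCongr_refl_right, Equiv.Perm.sign_prodCongrLeft]
    simp [pow_two]
  have h2 : Equiv.Perm.sign (Equiv.prodCongrRight σ) = ∏ a, χ (s a) := by
    rw [Equiv.Perm.sign_prodCongrRight]
    refine Finset.prod_congr rfl fun a _ => ?_
    cases hsa : s a <;> simp [hσ, hsa, χ, Equiv.Perm.sign_swap (by simp : (false : Bool) ≠ true)]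
  rw [h1, h2, one_mul]

lemma swap_criterion (g : Equiv.Perm α) (f : Equiv.Perm (α × Bool)) (s : α → Bool)
    (hs : ∀ a b, f (a, b) = (g a, xor (s a) b)) (a : α) :
    ((f ^ Function.minimalPeriod g a) (a, true) = (a, true)) ↔
      xorIter s g (Function.minimalPeriod g a) a = false := by
  have hfix : (g ^ Function.minimalPeriod g a) a = a :=
    Function.isPeriodicPt_minimalPeriod g a
  rw [lift_pow_apply g f s hs, hfix, Prod.mk.injEq]
  cases h : xorIter s g (Function.minimalPeriod g a) a <;> simp [h]

lemma prod_range_χ (s : α → Bool) (g : Equiv.Perm α) (a : α) :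
    ∀ n : ℕ, ∏ k ∈ Finset.range n, χ (s ((g ^ k) a)) = χ (xorIter s g n a)
  | 0 => by simp [xorIter, χ]
  | n + 1 => by
    rw [Finset.prod_range_succ, prod_range_χ s g a n]
    exact (χ_xor _ _).symm

lemma prod_eq_of_orbit_parity (g : Equiv.Perm α) (u₁ u₂ : α → ℤˣ)
    (hp : ∀ a, ∏ k ∈ Finset.range (Function.minimalPeriod g a), u₁ ((g ^ k) a)
            = ∏ k ∈ Finset.range (Function.minimalPeriod g a), u₂ ((g ^ k) a)) :
    ∀ t : Finset α, (∀ x ∈ t, g x ∈ t) → ∏ a ∈ t, u₁ a = ∏ a ∈ t, u₂ a := by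
  intro t
  induction t using Finset.strongInduction with
  | _ t ih =>
    intro hcl
    rcases t.eq_empty_or_nonempty with rfl | ⟨a, ha⟩
    · simp
    · set ℓ := Function.minimalPeriod g a with hℓ
      have hper : (g ^ ℓ) a = a := Function.isPeriodicPt_minimalPeriod g a
      have hℓpos : 0 < ℓ := by
        refine Function.IsPeriodicPt.minimalPeriod_pos (orderOf_pos g) ?_
        show g^[orderOf g] a = a
        rw [Equiv.Perm.iterate_eq_pow, pow_orderOf_eq_one]; rfl
      set O : Finset α := (Finset.range ℓ).image (fun k => (g ^ k) a) with hO
      have hmem : ∀ k : ℕ, (g ^ k) a ∈ t := by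
        intro k
        induction k with
        | zero => simpa using ha
        | succ n ihn =>
          rw [pow_succ' g n, Equiv.Perm.mul_apply]
          exact hcl _ ihn
      have hOt : O ⊆ t := by
        intro x hx
        obtain ⟨k, _, rfl⟩ := Finset.mem_image.1 hx
        exact hmem k
      have haO : a ∈ O :=
        Finset.mem_image.2 ⟨0, Finset.mem_range.2 hℓpos, by simp⟩
      have hinj : ∀ x ∈ Finset.range ℓ, ∀ y ∈ Finset.range ℓ,
          (g ^ x) a = (g ^ y) a → x = y := by
        intro x hx y hy hxy
        exact Function.iterate_injOn_Iio_minimalPeriod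
          (Set.mem_Iio.2 (Finset.mem_range.1 hx)) (Set.mem_Iio.2 (Finset.mem_range.1 hy))
          (by simpa [Equiv.Perm.iterate_eq_pow] using hxy)
      have hprodO : ∀ u : α → ℤˣ, ∏ x ∈ O, u x = ∏ k ∈ Finset.range ℓ, u ((g ^ k) a) :=
        fun u => Finset.prod_image hinj
      have hclsd : ∀ x ∈ t \ O, g x ∈ t \ O := by
        intro x hx
        rw [Finset.mem_sdiff] at hx ⊢
        refine ⟨hcl _ hx.1, fun hgO => ?_⟩
        obtain ⟨k, hk, hgx⟩ := Finset.mem_image.1 hgO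
        rw [Finset.mem_range] at hk
        apply hx.2
        cases k with
        | zero =>
          have : g x = g ((g ^ (ℓ - 1)) a) := by
            rw [← Equiv.Perm.mul_apply, ← pow_succ' g (ℓ - 1),
              Nat.sub_add_cancel hℓpos, hper]
            simpa using hgx.symm
          have hx' : x = (g ^ (ℓ - 1)) a := g.injective this
          exact Finset.mem_image.2 ⟨ℓ - 1, Finset.mem_range.2 (Nat.pred_lt hℓpos.ne'), hx'.symm⟩
        | succ n =>
          have : g x = g ((g ^ n) a) := by
            rw [← Equiv.Perm.mul_apply, ← pow_succ' g n]; exact hgx.symm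
          have hx' : x = (g ^ n) a := g.injective this
          exact Finset.mem_image.2 ⟨n, Finset.mem_range.2 (Nat.lt_of_succ_lt hk), hx'.symm⟩
      have hss : t \ O ⊂ t := by
        refine Finset.ssubset_iff_of_subset Finset.sdiff_subset |>.2 ⟨a, ha, ?_⟩
        simp [haO]
      have hrec := ih (t \ O) hss hclsd
      rw [← Finset.prod_sdiff hOt, ← Finset.prod_sdiff hOt, hrec, hprodO u₁, hprodO u₂, hp a]

end SignLiftAux

theorem sign_of_lift_depends_only_on_swapped_fibers
    {α : Type*} [Fintype α] [DecidableEq α]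
    (g : Equiv.Perm α) (f₁ f₂ : Equiv.Perm (α × Bool))
    (hf₁ : ∀ (a : α) (b : Bool), (f₁ (a, b)).1 = g a)
    (hf₂ : ∀ (a : α) (b : Bool), (f₂ (a, b)).1 = g a)
    (h : ∀ a : α,
      ((f₁ ^ Function.minimalPeriod g a) (a, true) = (a, true)) ↔
      ((f₂ ^ Function.minimalPeriod g a) (a, true) = (a, true))) :
    Equiv.Perm.sign f₁ = Equiv.Perm.sign f₂ := by
  classical
  set s₁ : α → Bool := fun a => !(f₁ (a, true)).2 with hs₁def
  set s₂ : α → Bool := fun a => !(f₂ (a, true)).2 with hs₂def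
  have hs₁ : ∀ a b, f₁ (a, b) = (g a, xor (s₁ a) b) := fun a b =>
    SignLiftAux.lift_apply g f₁ hf₁ a b
  have hs₂ : ∀ a b, f₂ (a, b) = (g a, xor (s₂ a) b) := fun a b =>
    SignLiftAux.lift_apply g f₂ hf₂ a b
  have hxor : ∀ a, SignLiftAux.xorIter s₁ g (Function.minimalPeriod g a) a
      = SignLiftAux.xorIter s₂ g (Function.minimalPeriod g a) a := by
    intro a
    have h1 := SignLiftAux.swap_criterion g f₁ s₁ hs₁ a
    have h2 := SignLiftAux.swap_criterion g f₂ s₂ hs₂ a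
    have this' := (h1.symm.trans ((h a).trans h2))
    cases hb1 : SignLiftAux.xorIter s₁ g (Function.minimalPeriod g a) a <;>
      cases hb2 : SignLiftAux.xorIter s₂ g (Function.minimalPeriod g a) a
    · rfl
    · rw [hb1, hb2] at this'; simpa using this'.mp rfl
    · rw [hb1, hb2] at this'; simpa using this'.mpr rfl
    · rfl
  have hp : ∀ a, ∏ k ∈ Finset.range (Function.minimalPeriod g a),
        SignLiftAux.χ (s₁ ((g ^ k) a))
      = ∏ k ∈ Finset.range (Function.minimalPeriod g a),
        SignLiftAux.χ (s₂ ((g ^ k) a)) := by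
    intro a
    rw [SignLiftAux.prod_range_χ, SignLiftAux.prod_range_χ, hxor a]
  have key := SignLiftAux.prod_eq_of_orbit_parity g
    (fun a => SignLiftAux.χ (s₁ a)) (fun a => SignLiftAux.χ (s₂ a)) hp
    Finset.univ (fun x _ => Finset.mem_univ _)
  rw [SignLiftAux.sign_lift g f₁ s₁ hs₁, SignLiftAux.sign_lift g f₂ s₂ hs₂]
  exact key
end

section
/- Let α be a finite type with decidable equality, let g be a permutation of α, and let f be a permutation of α × Bool lifting g (i.e. (f (a,b)).1 = g a for all a, b). If a, a' : α lie in the same cycle of g (g.SameCycle a a'), then f swaps the fiber over a if and only if f swaps the fiber over a': that is, (f ^ Function.minimalPeriod g a) (a, true) = (a, true) ↔ (f ^ Function.minimalPeriod g a') (a', true) = (a', true). -/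
private lemma lift_pow {α : Type*} (g : Equiv.Perm α) (f : Equiv.Perm (α × Bool))
    (hf : ∀ (a : α) (b : Bool), (f (a, b)).1 = g a) :
    ∀ (k : ℕ) (a : α) (b : Bool), ((f ^ k) (a, b)).1 = (g ^ k) a := by
  intro k
  induction k with
  | zero => simp
  | succ n ih =>
    intro a b
    have h1 : (f ^ (n + 1)) (a, b) = f ((f ^ n) (a, b)) := by
      rw [pow_succ', Equiv.Perm.mul_apply]
    rw [h1]
    obtain ⟨c, b', hcb⟩ : ∃ c b', (f ^ n) (a, b) = (c, b') :=
      ⟨_, _, Prod.mk.eta.symm⟩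
    rw [hcb]
    have hc : c = (g ^ n) a := by rw [← ih a b, hcb]
    rw [hf c b', hc, pow_succ', Equiv.Perm.mul_apply]

private lemma period_eq {α : Type*} [Fintype α] (g : Equiv.Perm α) {a a' : α}
    (h : g.SameCycle a a') :
    Function.minimalPeriod g a = Function.minimalPeriod g a' := by
  have key : ∀ x y : α, g.SameCycle x y →
      Function.minimalPeriod g y ∣ Function.minimalPeriod g x := by
    intro x y hxy
    obtain ⟨j, hj⟩ := hxy
    set n := Function.minimalPeriod (⇑g) x with hn
    have hx : (g ^ (n : ℤ)) x = x := by
      have := Function.isPeriodicPt_minimalPeriod (⇑g) x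
      rwa [Function.IsPeriodicPt, Function.IsFixedPt, Equiv.Perm.iterate_eq_pow,
        ← zpow_natCast] at this
    have hy : (g ^ (n : ℤ)) y = y := by
      rw [← hj, ← Equiv.Perm.mul_apply, ← zpow_add, add_comm, zpow_add,
        Equiv.Perm.mul_apply, hx]
    refine Function.IsPeriodicPt.minimalPeriod_dvd ?_
    rw [Function.IsPeriodicPt, Function.IsFixedPt, Equiv.Perm.iterate_eq_pow,
      ← zpow_natCast]
    exact hy
  exact Nat.dvd_antisymm (key a' a h.symm) (key a a' h)

private lemma one_dir {α : Type*} [Fintype α] [DecidableEq α]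
    (g : Equiv.Perm α) (f : Equiv.Perm (α × Bool))
    (hf : ∀ (a : α) (b : Bool), (f (a, b)).1 = g a)
    (a a' : α) (hcyc : g.SameCycle a a')
    (h : (f ^ Function.minimalPeriod g a) (a, true) = (a, true)) :
    (f ^ Function.minimalPeriod g a') (a', true) = (a', true) := by
  set n := Function.minimalPeriod (⇑g) a with hn
  have hnn : Function.minimalPeriod (⇑g) a' = n := (period_eq g hcyc).symm
  rw [hnn]
  obtain ⟨j, hj, hja⟩ := hcyc.exists_pow_eq'
  have h1 : ((f ^ j) (a, true)).1 = a' := by rw [lift_pow g f hf, hja]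
  have hb : (f ^ j) (a, true) = (a', ((f ^ j) (a, true)).2) := Prod.ext h1 rfl
  set b := ((f ^ j) (a, true)).2 with hbdef
  have hcomm : (f ^ n) ((f ^ j) (a, true)) = (f ^ j) ((f ^ n) (a, true)) := by
    rw [← Equiv.Perm.mul_apply, ← Equiv.Perm.mul_apply, ← pow_add, ← pow_add, add_comm]
  have hfix : (f ^ n) (a', b) = (a', b) := by
    rw [← hb, hcomm, h, hb]
  have hga' : (g ^ n) a' = a' := by
    have := Function.isPeriodicPt_minimalPeriod (⇑g) a'
    rw [hnn] at this
    rwa [Function.IsPeriodicPt, Function.IsFixedPt, Equiv.Perm.iterate_eq_pow] at this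
  rcases Bool.eq_false_or_eq_true b with hbv | hbv
  · rw [hbv] at hfix
    exact hfix
  · -- b = false
    rw [hbv] at hfix
    have h2 : ((f ^ n) (a', true)).1 = a' := by rw [lift_pow g f hf, hga']
    have hb2 : (f ^ n) (a', true) = (a', ((f ^ n) (a', true)).2) := Prod.ext h2 rfl
    rcases Bool.eq_false_or_eq_true ((f ^ n) (a', true)).2 with hbv2 | hbv2
    · rw [hbv2] at hb2
      exact hb2
    · exfalso
      rw [hbv2] at hb2
      have := (f ^ n).injective (hb2.trans hfix.symm)
      simp at this

theorem swap_fiber_constant_on_cycles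
    {α : Type*} [Fintype α] [DecidableEq α]
    (g : Equiv.Perm α) (f : Equiv.Perm (α × Bool))
    (hf : ∀ (a : α) (b : Bool), (f (a, b)).1 = g a)
    (a a' : α) (hcyc : g.SameCycle a a') :
    (f ^ Function.minimalPeriod g a) (a, true) = (a, true) ↔
    (f ^ Function.minimalPeriod g a') (a', true) = (a', true) :=
  ⟨one_dir g f hf a a' hcyc, one_dir g f hf a' a hcyc.symm⟩
end

section
/- Let α be a finite type with decidable equality, let g be a permutation of α, and let f be a permutation of α × Bool lifting g (i.e. (f (a,b)).1 = g a for all a, b). Then for every a : α and b : Bool, the minimal period of f at (a,b) equals either ℓ(a) or 2·ℓ(a), where ℓ(a) = Function.minimalPeriod g a: that is, Function.minimalPeriod f (a,b) = Function.minimalPeriod g a ∨ Function.minimalPeriod f (a,b) = 2 * Function.minimalPeriod g a. -/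
theorem lifted_cycle_length_dichotomy
    {α : Type*} [Fintype α] [DecidableEq α]
    (g : Equiv.Perm α) (f : Equiv.Perm (α × Bool))
    (hf : ∀ (a : α) (b : Bool), (f (a, b)).1 = g a)
    (a : α) (b : Bool) :
    Function.minimalPeriod f (a, b) = Function.minimalPeriod g a ∨
    Function.minimalPeriod f (a, b) = 2 * Function.minimalPeriod g a := by
  have key : ∀ (n : ℕ) (p : α × Bool), (f^[n] p).1 = g^[n] p.1 := by
    intro n
    induction n with
    | zero => intro p; simp
    | succ n ih =>
      intro p
      rw [Function.iterate_succ_apply', Function.iterate_succ_apply', ← ih p]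
      exact hf (f^[n] p).1 (f^[n] p).2
  set ℓ := Function.minimalPeriod g a with hℓ
  set m := Function.minimalPeriod f (a, b) with hm
  have hgper : Function.IsPeriodicPt g ℓ a := Function.isPeriodicPt_minimalPeriod g a
  have hfper : Function.IsPeriodicPt f m (a, b) := Function.isPeriodicPt_minimalPeriod f (a, b)
  have hℓpos : 0 < ℓ := by
    have : Function.IsPeriodicPt g (orderOf g) a := by
      rw [Function.IsPeriodicPt, Function.IsFixedPt, Equiv.Perm.iterate_eq_pow,
        pow_orderOf_eq_one]; rfl
    exact this.minimalPeriod_pos (orderOf_pos g)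
  have hmpos : 0 < m := by
    have : Function.IsPeriodicPt f (orderOf f) (a, b) := by
      rw [Function.IsPeriodicPt, Function.IsFixedPt, Equiv.Perm.iterate_eq_pow,
        pow_orderOf_eq_one]; rfl
    exact this.minimalPeriod_pos (orderOf_pos f)
  -- ℓ ∣ m
  have hdvd1 : ℓ ∣ m := by
    apply Function.IsPeriodicPt.minimalPeriod_dvd
    have := congrArg Prod.fst hfper
    rwa [Function.IsPeriodicPt, Function.IsFixedPt, key m (a, b)] at *
  have hfst : (f^[ℓ] (a, b)).1 = a := by rw [key ℓ (a, b)]; exact hgper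
  have hfst' : (f^[ℓ] (a, !b)).1 = a := by rw [key ℓ (a, !b)]; exact hgper
  rcases Bool.eq_or_eq_not (f^[ℓ] (a, b)).2 b with hb | hb
  · left
    have : Function.IsPeriodicPt f ℓ (a, b) := by
      rw [Function.IsPeriodicPt, Function.IsFixedPt]
      exact Prod.ext hfst hb
    have hdvd2 : m ∣ ℓ := this.minimalPeriod_dvd
    exact Nat.dvd_antisymm hdvd2 hdvd1
  · right
    have h1 : f^[ℓ] (a, b) = (a, !b) := Prod.ext hfst hb
    have h2 : f^[ℓ] (a, !b) = (a, b) := by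
      rcases Bool.eq_or_eq_not (f^[ℓ] (a, !b)).2 (!b) with hb2 | hb2
      · exfalso
        have : f^[ℓ] (a, !b) = (a, !b) := Prod.ext hfst' hb2
        have hinj : Function.Injective (f^[ℓ]) := f.injective.iterate ℓ
        have := hinj (h1.trans this.symm)
        simp at this
      · simp only [Bool.not_not] at hb2
        exact Prod.ext hfst' hb2
    have : Function.IsPeriodicPt f (2 * ℓ) (a, b) := by
      rw [Function.IsPeriodicPt, Function.IsFixedPt, two_mul, Function.iterate_add_apply,
        h1, h2]
    have hdvd2 : m ∣ 2 * ℓ := this.minimalPeriod_dvd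
    -- ℓ ∣ m and m ∣ 2ℓ, m ≠ ℓ
    obtain ⟨k, hk⟩ := hdvd1
    have hkpos : 0 < k := by
      rcases Nat.eq_zero_or_pos k with h | h
      · subst h; simp at hk; omega
      · exact h
    have hk2 : k ≤ 2 := by
      by_contra h
      push_neg at h
      have : m ≤ 2 * ℓ := Nat.le_of_dvd (by positivity) hdvd2
      nlinarith
    interval_cases k
    · exfalso
      have hml : m = ℓ := by omega
      have : Function.IsPeriodicPt f ℓ (a, b) := hml ▸ hfper
      rw [Function.IsPeriodicPt, Function.IsFixedPt, h1] at this
      simp at this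
    · omega
end

section
/- Let α be a finite type with decidable equality, let g be a permutation of α, and let f be a permutation of α × Bool lifting g (i.e. (f (a,b)).1 = g a for all a, b). Let a : α and set ℓ(a) = Function.minimalPeriod g a. If f does not swap the fiber over a, i.e. (f ^ ℓ(a)) (a, true) = (a, true), then for every b : Bool one has Function.minimalPeriod f (a, b) = ℓ(a), and moreover (a, true) and (a, false) do not lie in the same cycle of f, i.e. ¬ f.SameCycle (a, true) (a, false). -/
private lemma lift_pow_fst {α : Type*} (g : Equiv.Perm α) (f : Equiv.Perm (α × Bool))
    (hf : ∀ (a : α) (b : Bool), (f (a, b)).1 = g a) :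
    ∀ (n : ℕ) (a : α) (b : Bool), ((f ^ n) (a, b)).1 = (g ^ n) a := by
  intro n
  induction n with
  | zero => intro a b; simp
  | succ n ih =>
    intro a b
    rw [pow_succ', pow_succ', Equiv.Perm.mul_apply, Equiv.Perm.mul_apply]
    rw [show ((f ^ n) (a, b)) = (((f ^ n) (a, b)).1, ((f ^ n) (a, b)).2) from rfl,
      hf, ih]

theorem lift_not_swapping_fiber_splits_into_two_cycles
    {α : Type*} [Fintype α] [DecidableEq α]
    (g : Equiv.Perm α) (f : Equiv.Perm (α × Bool))
    (hf : ∀ (a : α) (b : Bool), (f (a, b)).1 = g a)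
    (a : α)
    (hswap : (f ^ Function.minimalPeriod g a) (a, true) = (a, true)) :
    (∀ b : Bool, Function.minimalPeriod f (a, b) = Function.minimalPeriod g a) ∧
    ¬ f.SameCycle (a, true) (a, false) := by
  set ℓ := Function.minimalPeriod g a with hℓ
  have hamem : a ∈ Function.periodicPts g := by
    refine ⟨orderOf g, orderOf_pos g, ?_⟩
    show (⇑g)^[orderOf g] a = a
    rw [← Equiv.Perm.coe_pow, pow_orderOf_eq_one]; rfl
  have hℓpos : 0 < ℓ := Function.minimalPeriod_pos_of_mem_periodicPts hamem
  -- f^ℓ fixes (a, false) as well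
  have hfalse : (f ^ ℓ) (a, false) = (a, false) := by
    have h1 : ((f ^ ℓ) (a, false)).1 = a := by
      rw [lift_pow_fst g f hf]
      have : (⇑g)^[ℓ] a = a := Function.iterate_minimalPeriod
      rwa [← Equiv.Perm.coe_pow] at this
    have h2 : ((f ^ ℓ) (a, false)).2 = false := by
      by_contra h
      have h2' : ((f ^ ℓ) (a, false)).2 = true := by
        cases hb : ((f ^ ℓ) (a, false)).2 <;> simp_all
      have : (f ^ ℓ) (a, false) = (a, true) := by
        ext <;> simp [h1, h2']
      have := (f ^ ℓ).injective (this.trans hswap.symm)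
      simp at this
    ext <;> simp [h1, h2]
  -- divisibility for each b
  have key : ∀ b : Bool, Function.minimalPeriod f (a, b) = ℓ := by
    intro b
    have hfix : (f ^ ℓ) (a, b) = (a, b) := by cases b <;> assumption
    have hper : Function.IsPeriodicPt (⇑f) ℓ (a, b) := by
      show (⇑f)^[ℓ] (a, b) = (a, b)
      rwa [← Equiv.Perm.coe_pow]
    have hd1 : Function.minimalPeriod (⇑f) (a, b) ∣ ℓ :=
      Function.IsPeriodicPt.minimalPeriod_dvd hper
    have hmem : (a, b) ∈ Function.periodicPts (⇑f) := ⟨ℓ, hℓpos, hper⟩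
    have hpos : 0 < Function.minimalPeriod (⇑f) (a, b) :=
      Function.minimalPeriod_pos_of_mem_periodicPts hmem
    have hd2 : ℓ ∣ Function.minimalPeriod (⇑f) (a, b) := by
      apply Function.IsPeriodicPt.minimalPeriod_dvd
      show (⇑g)^[Function.minimalPeriod (⇑f) (a, b)] a = a
      rw [← Equiv.Perm.coe_pow, ← lift_pow_fst g f hf _ a b]
      have : (⇑f)^[Function.minimalPeriod (⇑f) (a, b)] (a, b) = (a, b) :=
        Function.iterate_minimalPeriod
      rw [← Equiv.Perm.coe_pow] at this
      rw [this]
    exact Nat.dvd_antisymm hd1 hd2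
  refine ⟨key, ?_⟩
  intro hsc
  obtain ⟨i, hi, hle, hpow⟩ := hsc.exists_pow_eq f
  have h1 : (g ^ i) a = a := by
    have := congrArg Prod.fst hpow
    rwa [lift_pow_fst g f hf] at this
  have hdvd : ℓ ∣ i := by
    apply Function.IsPeriodicPt.minimalPeriod_dvd
    show (⇑g)^[i] a = a
    rwa [← Equiv.Perm.coe_pow]
  obtain ⟨k, rfl⟩ := hdvd
  have : (f ^ (ℓ * k)) (a, true) = (a, true) := by
    rw [pow_mul]
    clear hpow hle hi h1
    induction k with
    | zero => simp
    | succ k ih =>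
      rw [pow_succ, Equiv.Perm.mul_apply, hswap, ih]
  rw [hpow] at this
  simp at this
end
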